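/- arXiv:2408.15285 — 3 statements merged into one kernel-verified Lean document; each statement's English description precedes it below -/
import Mathlib

section
/- For every δ > 0 there exists a constant c > 0 with the following property: for every z ∈ ℂ such that cos z ≠ 0, |z − kπ| ≥ δ for all k ∈ ℤ, and |z − w| ≥ δ for every real w with cos w = 1/4 or cos w = −1/4, one has |(15/4)·cos z·sin² z − (sin⁴ z)/(4·cos z)| ≥ c·e^{3·|Im z|}. -/
open Complex

/-- Periodic reduction + compactness lemma. -/
lemma keylem (g : ℂ → ℂ) (hg : Continuous g) (Z : Set ℂ)
    (p : ℝ) (hp : 0 < p)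
    (hper : ∀ (z : ℂ) (n : ℤ), ‖g (z + (n : ℂ) * (p : ℂ))‖ = ‖g z‖)
    (hZshift : ∀ w ∈ Z, ∀ n : ℤ, w + (n : ℂ) * (p : ℂ) ∈ Z)
    (hzero : ∀ z : ℂ, g z = 0 → z ∈ Z)
    (c0 : ℝ) (hc0 : 0 < c0)
    (hgrow : ∀ z : ℂ, 1 ≤ |z.im| → c0 * Real.exp |z.im| ≤ ‖g z‖)
    (δ : ℝ) (hδ : 0 < δ) :
    ∃ c : ℝ, 0 < c ∧ ∀ z : ℂ, (∀ w ∈ Z, δ ≤ ‖z - w‖) →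
      c * Real.exp |z.im| ≤ ‖g z‖ := by
  set K : Set ℂ := {z : ℂ | z.re ∈ Set.Icc (0:ℝ) p ∧ |z.im| ≤ 1 ∧
      ∀ w ∈ Z, δ ≤ ‖z - w‖} with hKdef
  have hKclosed : IsClosed K := by
    have h1 : IsClosed {z : ℂ | z.re ∈ Set.Icc (0:ℝ) p} :=
      isClosed_Icc.preimage Complex.continuous_re
    have h2 : IsClosed {z : ℂ | |z.im| ≤ 1} :=
      isClosed_le (continuous_abs.comp Complex.continuous_im) continuous_const
    have h3 : IsClosed {z : ℂ | ∀ w ∈ Z, δ ≤ ‖z - w‖} := by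
      have he : {z : ℂ | ∀ w ∈ Z, δ ≤ ‖z - w‖} =
          ⋂ w ∈ Z, {z : ℂ | δ ≤ ‖z - w‖} := by
        ext z; simp
      rw [he]
      exact isClosed_biInter fun w _ => isClosed_le continuous_const
        (continuous_norm.comp (continuous_id.sub continuous_const))
    exact h1.inter (h2.inter h3)
  have hKcompact : IsCompact K := by
    apply Metric.isCompact_of_isClosed_isBounded hKclosed
    apply (Metric.isBounded_closedBall (x := (0:ℂ)) (r := p + 1)).subset
    intro z hz
    rcases hz with ⟨⟨hre0, hrep⟩, him, -⟩
    have : ‖z‖ ≤ |z.re| + |z.im| := Complex.norm_le_abs_re_add_abs_im z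
    have hre : |z.re| ≤ p := by rw [_root_.abs_of_nonneg hre0]; exact hrep
    simp only [Metric.mem_closedBall, Complex.dist_eq, sub_zero]
    linarith
  -- periodic reduction
  have hred : ∀ z : ℂ, |z.im| ≤ 1 → (∀ w ∈ Z, δ ≤ ‖z - w‖) →
      ∃ z' ∈ K, ‖g z'‖ = ‖g z‖ := by
    intro z him hz
    set n : ℤ := ⌊z.re / p⌋ with hn
    refine ⟨z - (n : ℂ) * (p : ℂ), ?_, ?_⟩
    · have ecast : ((n : ℂ) * (p : ℂ)) = (((n : ℝ) * p : ℝ) : ℂ) := by push_cast; ring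
      have hre : (z - (n : ℂ) * (p : ℂ)).re = z.re - (n : ℝ) * p := by
        rw [ecast, Complex.sub_re, Complex.ofReal_re]
      have him2 : (z - (n : ℂ) * (p : ℂ)).im = z.im := by
        rw [ecast, Complex.sub_im, Complex.ofReal_im, sub_zero]
      refine ⟨?_, ?_, ?_⟩
      · constructor
        · rw [hre]; exact Int.sub_floor_div_mul_nonneg z.re hp
        · rw [hre]; exact (Int.sub_floor_div_mul_lt z.re hp).le
      · rw [him2]; exact him
      · intro w hw
        have h2 : z - (n : ℂ) * (p : ℂ) - w = z - (w + (n : ℂ) * (p : ℂ)) := by ring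
        rw [h2]
        exact hz _ (hZshift w hw n)
    · have h3 := hper (z - (n : ℂ) * (p : ℂ)) n
      rw [sub_add_cancel] at h3
      exact h3.symm
  rcases K.eq_empty_or_nonempty with hKe | hKne
  · refine ⟨c0, hc0, ?_⟩
    intro z hz
    rcases le_or_gt 1 |z.im| with h1 | h1
    · exact hgrow z h1
    · obtain ⟨z', hz', -⟩ := hred z h1.le hz
      rw [hKe] at hz'
      exact absurd hz' (Set.notMem_empty z')
  · obtain ⟨w₀, hw₀K, hw₀min⟩ := hKcompact.exists_isMinOn hKne
      ((continuous_norm.comp hg).continuousOn)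
    set m := ‖g w₀‖ with hm'
    have hm : 0 < m := by
      rcases eq_or_ne (g w₀) 0 with h | h
      · exfalso
        have h4 := hw₀K.2.2 w₀ (hzero w₀ h)
        simp at h4
        linarith
      · exact norm_pos_iff.mpr h
    refine ⟨min c0 (m / Real.exp 1), lt_min hc0 (div_pos hm (Real.exp_pos 1)), ?_⟩
    intro z hz
    rcases le_or_gt 1 |z.im| with h1 | h1
    · calc min c0 (m / Real.exp 1) * Real.exp |z.im|
          ≤ c0 * Real.exp |z.im| := by
            apply mul_le_mul_of_nonneg_right (min_le_left _ _) (Real.exp_pos _).le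
        _ ≤ ‖g z‖ := hgrow z h1
    · obtain ⟨z', hz'K, habs⟩ := hred z h1.le hz
      calc min c0 (m / Real.exp 1) * Real.exp |z.im|
          ≤ (m / Real.exp 1) * Real.exp 1 := by
            apply mul_le_mul (min_le_right _ _) (Real.exp_le_exp.2 h1.le)
              (Real.exp_pos _).le (div_nonneg hm.le (Real.exp_pos 1).le)
        _ = m := div_mul_cancel₀ m (Real.exp_ne_zero 1)
        _ ≤ ‖g z'‖ := hw₀min hz'K
        _ = ‖g z‖ := habs

lemma abs_exp_mul_I (z : ℂ) : ‖Complex.exp (z * I)‖ = Real.exp (-z.im) := by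
  rw [Complex.norm_exp]
  congr 1
  simp [Complex.mul_re]

lemma abs_exp_neg_mul_I (z : ℂ) : ‖Complex.exp (-z * I)‖ = Real.exp z.im := by
  rw [Complex.norm_exp]
  congr 1
  simp [Complex.mul_re]

lemma sin_abs_lower (z : ℂ) :
    (Real.exp |z.im| - Real.exp (-|z.im|)) / 2 ≤ ‖Complex.sin z‖ := by
  have hdef : Complex.sin z = (Complex.exp (-z * I) - Complex.exp (z * I)) * I / 2 := rfl
  have h1 : ‖Complex.sin z‖
      = ‖Complex.exp (-z * I) - Complex.exp (z * I)‖ / 2 := by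
    rw [hdef, norm_div, norm_mul, Complex.norm_I, mul_one]
    norm_num
  rw [h1]
  have t1 := norm_sub_norm_le (Complex.exp (-z * I)) (Complex.exp (z * I))
  have t2 := norm_sub_norm_le (Complex.exp (z * I)) (Complex.exp (-z * I))
  rw [show Complex.exp (z * I) - Complex.exp (-z * I)
      = -(Complex.exp (-z * I) - Complex.exp (z * I)) by ring, norm_neg] at t2
  rw [abs_exp_neg_mul_I, abs_exp_mul_I] at t1 t2
  rcases le_total 0 z.im with h | h
  · rw [_root_.abs_of_nonneg h]; linarith
  · rw [_root_.abs_of_nonpos h, neg_neg]; linarith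

lemma cos_abs_lower (z : ℂ) :
    (Real.exp |z.im| - Real.exp (-|z.im|)) / 2 ≤ ‖Complex.cos z‖ := by
  have hdef : Complex.cos z = (Complex.exp (z * I) + Complex.exp (-z * I)) / 2 := rfl
  have h1 : ‖Complex.cos z‖
      = ‖Complex.exp (z * I) + Complex.exp (-z * I)‖ / 2 := by
    rw [hdef, norm_div]
    norm_num
  rw [h1]
  have t1 := norm_sub_norm_le (Complex.exp (-z * I)) (-Complex.exp (z * I))
  have t2 := norm_sub_norm_le (Complex.exp (z * I)) (-Complex.exp (-z * I))
  rw [show Complex.exp (-z * I) - -Complex.exp (z * I)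
      = Complex.exp (z * I) + Complex.exp (-z * I) by ring, norm_neg] at t1
  rw [show Complex.exp (z * I) - -Complex.exp (-z * I)
      = Complex.exp (z * I) + Complex.exp (-z * I) by ring, norm_neg] at t2
  rw [abs_exp_neg_mul_I, abs_exp_mul_I] at t1 t2
  rcases le_total 0 z.im with h | h
  · rw [_root_.abs_of_nonneg h]; linarith
  · rw [_root_.abs_of_nonpos h, neg_neg]; linarith

lemma cos_abs_upper (z : ℂ) : ‖Complex.cos z‖ ≤ Real.exp |z.im| := by
  have hdef : Complex.cos z = (Complex.exp (z * I) + Complex.exp (-z * I)) / 2 := rfl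
  have h1 : ‖Complex.cos z‖
      ≤ (‖Complex.exp (z * I)‖ + ‖Complex.exp (-z * I)‖) / 2 := by
    rw [hdef, norm_div, show ‖(2:ℂ)‖ = 2 by norm_num]
    gcongr
    exact norm_add_le _ _
  rw [abs_exp_mul_I, abs_exp_neg_mul_I] at h1
  have h2 : Real.exp (-z.im) ≤ Real.exp |z.im| := Real.exp_le_exp.2 (neg_le_abs z.im)
  have h3 : Real.exp z.im ≤ Real.exp |z.im| := Real.exp_le_exp.2 (le_abs_self z.im)
  linarith

/-- If `cos z` is a real number of absolute value `< 1`, then `z` is real. -/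
lemma cos_eq_real_imp_real {z : ℂ} {a : ℝ} (ha : |a| < 1) (h : Complex.cos z = (a : ℂ)) :
    z.im = 0 ∧ Real.cos z.re = a := by
  have hc := (Complex.cos_eq z).symm.trans h
  have hre : Real.cos z.re * Real.cosh z.im = a := by
    have h0 := congrArg Complex.re hc
    simpa [Complex.sub_re, Complex.mul_re, Complex.mul_im, Complex.I_re, Complex.I_im,
      Complex.cos_ofReal_re, Complex.cos_ofReal_im, Complex.cosh_ofReal_re,
      Complex.cosh_ofReal_im, Complex.sin_ofReal_re, Complex.sin_ofReal_im,
      Complex.sinh_ofReal_re, Complex.sinh_ofReal_im, Complex.ofReal_re] using h0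
  have him : Real.sin z.re * Real.sinh z.im = 0 := by
    have h0 := congrArg Complex.im hc
    simp only [Complex.sub_im, Complex.mul_im, Complex.mul_re, Complex.I_re, Complex.I_im,
      Complex.cos_ofReal_re, Complex.cos_ofReal_im, Complex.cosh_ofReal_re,
      Complex.cosh_ofReal_im, Complex.sin_ofReal_re, Complex.sin_ofReal_im,
      Complex.sinh_ofReal_re, Complex.sinh_ofReal_im, Complex.ofReal_im] at h0
    linarith
  have hy : z.im = 0 := by
    by_contra hy
    have hs : Real.sinh z.im ≠ 0 := Real.sinh_ne_zero.2 hy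
    have hsin : Real.sin z.re = 0 := by
      rcases mul_eq_zero.1 him with h' | h'
      · exact h'
      · exact absurd h' hs
    have hcos : Real.cos z.re = 1 ∨ Real.cos z.re = -1 :=
      Real.sin_eq_zero_iff_cos_eq.1 hsin
    have hch : 1 < Real.cosh z.im := Real.one_lt_cosh.2 hy
    have habs : |a| = Real.cosh z.im := by
      rw [← hre, abs_mul]
      have hpos : 0 < Real.cosh z.im := by linarith
      rcases hcos with h' | h' <;> rw [h'] <;>
        simp [_root_.abs_of_pos hpos]
    linarith
  refine ⟨hy, ?_⟩
  rw [hy, Real.cosh_zero, mul_one] at hre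
  exact hre

/-- Lower bound for `|sin|` away from `πℤ`. -/
lemma sin_lower (δ : ℝ) (hδ : 0 < δ) :
    ∃ c : ℝ, 0 < c ∧ ∀ z : ℂ,
      (∀ k : ℤ, δ ≤ ‖z - (k : ℂ) * Real.pi‖) →
      c * Real.exp |z.im| ≤ ‖Complex.sin z‖ := by
  have hc0 : (0:ℝ) < (1 - Real.exp (-2)) / 2 := by
    have : Real.exp (-2) < 1 := by
      calc Real.exp (-2) < Real.exp 0 := Real.exp_lt_exp.2 (by norm_num)
        _ = 1 := Real.exp_zero
    linarith
  obtain ⟨c, hc, H⟩ := keylem Complex.sin Complex.continuous_sin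
    {z : ℂ | ∃ k : ℤ, z = (k : ℂ) * (Real.pi : ℂ)} Real.pi Real.pi_pos
    (by
      intro z n
      have h1 : Complex.sin (z + (n : ℂ) * (Real.pi : ℂ))
          = Complex.sin z * Complex.cos ((n : ℂ) * (Real.pi : ℂ)) := by
        rw [Complex.sin_add]
        rw [show Complex.sin ((n : ℂ) * (Real.pi : ℂ)) = 0 from Complex.sin_int_mul_pi n]
        ring
      rw [h1, norm_mul]
      have h2 : ‖Complex.cos ((n : ℂ) * (Real.pi : ℂ))‖ = 1 := by
        rw [show ((n : ℂ) * (Real.pi : ℂ)) = (((n : ℝ) * Real.pi : ℝ) : ℂ) by push_cast; ring,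
          ← Complex.ofReal_cos, Complex.norm_real, Real.norm_eq_abs]
        exact Real.abs_cos_int_mul_pi n
      rw [h2, mul_one])
    (by
      rintro w ⟨k, rfl⟩ n
      exact ⟨k + n, by push_cast; ring⟩)
    (by
      intro z hz
      exact Complex.sin_eq_zero_iff.1 hz)
    ((1 - Real.exp (-2)) / 2) hc0
    (by
      intro z h1
      have hlow := sin_abs_lower z
      have hexp : Real.exp (-|z.im|) ≤ Real.exp (-2) * Real.exp |z.im| := by
        rw [← Real.exp_add]
        exact Real.exp_le_exp.2 (by linarith)
      nlinarith [Real.exp_pos |z.im|])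
    δ hδ
  refine ⟨c, hc, ?_⟩
  intro z hk
  apply H
  rintro w ⟨k, rfl⟩
  exact hk k

/-- Lower bound for `|4 cos z - ε|` (`ε = ±1`) away from its (real) zeros. -/
lemma cos_factor_lower (δ : ℝ) (hδ : 0 < δ) (ε : ℝ) (hε : ε = 1 ∨ ε = -1) :
    ∃ c : ℝ, 0 < c ∧ ∀ z : ℂ,
      (∀ w : ℝ, Real.cos w = ε / 4 → δ ≤ ‖z - (w : ℂ)‖) →
      c * Real.exp |z.im| ≤ ‖4 * Complex.cos z - (ε : ℂ)‖ := by
  have h2lt : (2:ℝ) < Real.exp 1 := by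
    have := Real.add_one_lt_exp (one_ne_zero (α := ℝ))
    linarith
  have hem : Real.exp (-1) * Real.exp 1 = 1 := by
    rw [← Real.exp_add]; norm_num
  have he1 : Real.exp (-1) < 1 / 2 := by nlinarith [Real.exp_pos (-1)]
  have he2 : Real.exp (-2) < 1 / 4 := by
    have : Real.exp (-2) = Real.exp (-1) * Real.exp (-1) := by
      rw [← Real.exp_add]; norm_num
    nlinarith [Real.exp_pos (-1)]
  have hc0 : (0:ℝ) < 2 - 2 * Real.exp (-2) - Real.exp (-1) := by linarith
  have habsε : |ε / 4| < 1 := by rcases hε with rfl | rfl <;> rw [abs_lt] <;> norm_num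
  obtain ⟨c, hc, H⟩ := keylem (fun z => 4 * Complex.cos z - (ε : ℂ))
    (by continuity)
    {z : ℂ | ∃ r : ℝ, Real.cos r = ε / 4 ∧ z = (r : ℂ)} (2 * Real.pi)
    (by positivity)
    (by
      intro z n
      have h1 : Complex.cos (z + (n : ℂ) * ((2 * Real.pi : ℝ) : ℂ)) = Complex.cos z := by
        have := Complex.cos_add_int_mul_two_pi z n
        rw [← this]
        norm_num
      simp only [h1])
    (by
      rintro w ⟨r, hr, rfl⟩ n
      refine ⟨r + n * (2 * Real.pi), ?_, by push_cast; ring⟩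
      rw [Real.cos_add_int_mul_two_pi r n]
      exact hr)
    (by
      intro z hz
      have hcz : Complex.cos z = ((ε / 4 : ℝ) : ℂ) := by
        have hz' : 4 * Complex.cos z - (ε : ℂ) = 0 := hz
        push_cast
        linear_combination hz' / 4
      obtain ⟨hy, hcr⟩ := cos_eq_real_imp_real habsε hcz
      exact ⟨z.re, hcr, by exact (Complex.ext (by simp) (by simp [hy])).symm⟩)
    (2 - 2 * Real.exp (-2) - Real.exp (-1)) hc0
    (by
      intro z h1
      have hlow := cos_abs_lower z
      have htri : 4 * ‖Complex.cos z‖ - 1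
          ≤ ‖4 * Complex.cos z - (ε : ℂ)‖ := by
        have := norm_sub_norm_le (4 * Complex.cos z) ((ε : ℝ) : ℂ)
        have hεab : ‖((ε : ℝ) : ℂ)‖ = 1 := by
          rw [Complex.norm_real, Real.norm_eq_abs]
          rcases hε with rfl | rfl <;> norm_num
        rw [norm_mul] at this
        simp only [Complex.norm_ofNat] at this
        rw [hεab] at this
        exact this
      have hexp2 : Real.exp (-|z.im|) ≤ Real.exp (-2) * Real.exp |z.im| := by
        rw [← Real.exp_add]; exact Real.exp_le_exp.2 (by linarith)
      have hexp1 : 1 ≤ Real.exp (-1) * Real.exp |z.im| := by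
        rw [← Real.exp_add]
        calc (1:ℝ) = Real.exp 0 := Real.exp_zero.symm
          _ ≤ _ := Real.exp_le_exp.2 (by linarith)
      nlinarith [Real.exp_pos |z.im|])
    δ hδ
  refine ⟨c, hc, ?_⟩
  intro z hw
  apply H
  rintro w ⟨r, hr, rfl⟩
  exact hw r hr

/-- Exponential lower bound for
`f₀(z) = (15/4)·cos z·sin² z − sin⁴ z/(4 cos z)` away from its zeros. -/
theorem stmt_5 (δ : ℝ) (hδ : 0 < δ) :
    ∃ c : ℝ, 0 < c ∧
      ∀ z : ℂ, Complex.cos z ≠ 0 →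
        (∀ k : ℤ, δ ≤ ‖z - (k : ℂ) * Real.pi‖) →
        (∀ w : ℝ, (Real.cos w = 1 / 4 ∨ Real.cos w = -(1 / 4)) →
          δ ≤ ‖z - (w : ℂ)‖) →
        c * Real.exp (3 * |z.im|) ≤
          ‖(15 / 4) * Complex.cos z * Complex.sin z ^ 2
            - Complex.sin z ^ 4 / (4 * Complex.cos z)‖ := by
  obtain ⟨c1, hc1, H1⟩ := sin_lower δ hδ
  obtain ⟨c2, hc2, H2⟩ := cos_factor_lower δ hδ 1 (Or.inl rfl)
  obtain ⟨c3, hc3, H3⟩ := cos_factor_lower δ hδ (-1) (Or.inr rfl)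
  refine ⟨c1 ^ 2 * c2 * c3 / 4, by positivity, ?_⟩
  intro z hcz hk hw
  have hS := H1 z hk
  have hA := H2 z (fun w hw' => hw w (Or.inl (by linarith [hw'])))
  have hB := H3 z (fun w hw' => hw w (Or.inr (by linarith [hw'])))
  have hup := cos_abs_upper z
  have hpos : 0 < ‖Complex.cos z‖ := norm_pos_iff.mpr hcz
  have e1 : (15 / 4 : ℂ) * Complex.cos z * Complex.sin z ^ 2
      - Complex.sin z ^ 4 / (4 * Complex.cos z)
      = Complex.sin z ^ 2 * (4 * Complex.cos z - 1) * (4 * Complex.cos z + 1)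
        / (4 * Complex.cos z) := by
    have hs := Complex.sin_sq_add_cos_sq z
    field_simp
    ring_nf
    linear_combination (-Complex.sin z ^ 2) * hs
  rw [e1]
  have habs : ‖Complex.sin z ^ 2 * (4 * Complex.cos z - 1)
      * (4 * Complex.cos z + 1) / (4 * Complex.cos z)‖
      = ‖Complex.sin z‖ ^ 2 * ‖4 * Complex.cos z - 1‖
        * ‖4 * Complex.cos z + 1‖ / (4 * ‖Complex.cos z‖) := by
    rw [norm_div, norm_mul, norm_mul, norm_pow, norm_mul]
    norm_num
  rw [habs]
  set E := Real.exp |z.im| with hE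
  have hEpos : 0 < E := Real.exp_pos _
  have h3E : Real.exp (3 * |z.im|) = E * E * E := by
    rw [hE, show (3:ℝ) * |z.im| = |z.im| + |z.im| + |z.im| by ring,
      Real.exp_add, Real.exp_add]
  rw [h3E]
  have hA' : c2 * E ≤ ‖4 * Complex.cos z - 1‖ := by
    have : ((1 : ℝ) : ℂ) = (1 : ℂ) := by norm_num
    rwa [this] at hA
  have hB' : c3 * E ≤ ‖4 * Complex.cos z + 1‖ := by
    have : (4 * Complex.cos z - ((-1 : ℝ) : ℂ)) = 4 * Complex.cos z + 1 := by
      push_cast; ring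
    rw [← this]
    exact hB
  calc c1 ^ 2 * c2 * c3 / 4 * (E * E * E)
      = (c1 * E) ^ 2 * (c2 * E) * (c3 * E) / (4 * E) := by
        field_simp
    _ ≤ ‖Complex.sin z‖ ^ 2 * ‖4 * Complex.cos z - 1‖
        * ‖4 * Complex.cos z + 1‖ / (4 * ‖Complex.cos z‖) := by
        apply div_le_div₀ (by positivity) ?_ (by linarith) (by linarith)
        have h1 : (0:ℝ) ≤ c1 * E := by positivity
        have h2 : (0:ℝ) ≤ c2 * E := by positivity
        have h3 : (0:ℝ) ≤ c3 * E := by positivity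
        gcongr
end

section
/- Let q : ℝ → ℝ be integrable on [0,1], set Q = ∫₀¹ |q(t)| dt, and let ρ ∈ ℂ with ρ ≠ 0, τ = |Im ρ|. Suppose u : ℝ → ℂ is continuous on [0,1] and satisfies the Volterra integral equation u(x) = sin(ρx)/ρ + ∫₀ˣ (sin(ρ(x−t))/ρ)·q(t)·u(t) dt for all x ∈ [0,1]. Then for every x ∈ [0,1], |u(x) − sin(ρx)/ρ| ≤ (Q/|ρ|²)·exp(τ·x + Q/|ρ|). -/
open Complex MeasureTheory intervalIntegral Set Filter

theorem abs_sin_le' (z : ℂ) : ‖Complex.sin z‖ ≤ Real.exp |z.im| := by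
  rw [Complex.sin]
  rw [norm_div, norm_mul]
  simp only [Complex.norm_I, mul_one, Complex.norm_ofNat]
  have h1 : ‖Complex.exp (-z * Complex.I) - Complex.exp (z * Complex.I)‖
      ≤ Real.exp z.im + Real.exp (-z.im) := by
    refine (norm_sub_le _ _).trans ?_
    rw [Complex.norm_exp, Complex.norm_exp]
    have e1 : (-z * Complex.I).re = z.im := by simp [Complex.mul_re]
    have e2 : (z * Complex.I).re = -z.im := by simp [Complex.mul_re]
    rw [e1, e2]
  have h2 : Real.exp z.im + Real.exp (-z.im) ≤ 2 * Real.exp |z.im| := by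
    have := Real.exp_le_exp.2 (le_abs_self z.im)
    have := Real.exp_le_exp.2 (neg_le_abs z.im)
    linarith
  calc ‖Complex.exp (-z * Complex.I) - Complex.exp (z * Complex.I)‖ / 2
      ≤ (2 * Real.exp |z.im|) / 2 := by
        apply div_le_div_of_nonneg_right ?_ ?_ <;> first | exact (h1.trans h2) | norm_num
    _ = Real.exp |z.im| := by ring

theorem gronwall_cont (c : ℝ → ℝ) (hc : Continuous c) (hc0 : ∀ t, 0 ≤ c t)
    (f : ℝ → ℝ) (hf : ContinuousOn f (Icc 0 1)) (a : ℝ)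
    (h : ∀ x ∈ Icc (0:ℝ) 1, f x ≤ a + ∫ t in (0:ℝ)..x, c t * f t) :
    ∀ x ∈ Icc (0:ℝ) 1, f x ≤ a * Real.exp (∫ t in (0:ℝ)..x, c t) := by
  set F : ℝ → ℝ := fun x => a + ∫ t in (0:ℝ)..x, c t * f t with hF
  set C : ℝ → ℝ := fun x => ∫ t in (0:ℝ)..x, c t with hC
  set G : ℝ → ℝ := fun x => F x * Real.exp (-(C x)) with hG
  have hcf : ContinuousOn (fun t => c t * f t) (Icc 0 1) :=
    (hc.continuousOn).mul hf
  have hcfInt : ∀ x ∈ Icc (0:ℝ) 1, IntervalIntegrable (fun t => c t * f t) volume 0 x := by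
    intro x hx
    apply ContinuousOn.intervalIntegrable
    apply hcf.mono
    rw [uIcc_of_le hx.1]
    exact Icc_subset_Icc le_rfl hx.2
  have hFcont : ContinuousOn F (Icc 0 1) := by
    apply continuousOn_const.add
    have h01 : (0:ℝ) ≤ 1 := zero_le_one
    have := intervalIntegral.continuousOn_primitive_interval'
      (hcfInt 1 (right_mem_Icc.2 h01))
      (by rw [uIcc_of_le h01]; exact left_mem_Icc.2 h01)
    rwa [uIcc_of_le h01] at this
  have hCdiff : ∀ x : ℝ, HasDerivAt C (c x) x := fun x =>
    (intervalIntegral.integral_hasStrictDerivAt_right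
      (hc.intervalIntegrable 0 x) (hc.stronglyMeasurableAtFilter volume (nhds x)) hc.continuousAt).hasDerivAt
  have hCc : Continuous C := by
    have : Differentiable ℝ C := fun x => (hCdiff x).differentiableAt
    exact this.continuous
  have hGcont : ContinuousOn G (Icc 0 1) :=
    hFcont.mul ((Real.continuous_exp.comp (continuous_neg.comp hCc)).continuousOn)
  have key : ∀ x ∈ interior (Icc (0:ℝ) 1), HasDerivAt G
      ((c x * f x - c x * F x) * Real.exp (-(C x))) x := by
    intro x hx
    rw [interior_Icc] at hx
    have hmem : Icc (0:ℝ) 1 ∈ nhds x := Icc_mem_nhds hx.1 hx.2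
    have hFd : HasDerivAt F (c x * f x) x := by
      apply HasDerivAt.const_add
      apply intervalIntegral.integral_hasDerivAt_right (hcfInt x ⟨hx.1.le, hx.2.le⟩)
      · exact ⟨Icc (0:ℝ) 1, hmem, hcf.aestronglyMeasurable measurableSet_Icc⟩
      · exact hcf.continuousAt hmem
    have hEd : HasDerivAt (fun y => Real.exp (-(C y))) (-(c x) * Real.exp (-(C x))) x := by
      have := ((hCdiff x).neg).exp
      simpa [mul_comm] using this
    have := hFd.mul hEd
    exact this.congr_deriv (by ring)
  have hanti : AntitoneOn G (Icc 0 1) := by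
    apply antitoneOn_of_deriv_nonpos (convex_Icc 0 1) hGcont
    · intro x hx; exact (key x hx).differentiableAt.differentiableWithinAt
    · intro x hx
      rw [(key x hx).deriv]
      rw [interior_Icc] at hx
      have hfF : f x ≤ F x := h x ⟨hx.1.le, hx.2.le⟩
      have : c x * f x - c x * F x ≤ 0 := by nlinarith [hc0 x]
      exact mul_nonpos_of_nonpos_of_nonneg this (Real.exp_nonneg _)
  intro x hx
  have hG0 : G 0 = a := by simp [hG, hF, hC]
  have := hanti (left_mem_Icc.2 zero_le_one) hx hx.1
  rw [hG0] at this
  have hFx : F x ≤ a * Real.exp (C x) := by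
    have hepos : (0:ℝ) < Real.exp (-(C x)) := Real.exp_pos _
    rw [hG] at this
    calc F x = F x * Real.exp (-(C x)) * Real.exp (C x) := by
          rw [mul_assoc, ← Real.exp_add]; simp
      _ ≤ a * Real.exp (C x) := by
          apply mul_le_mul_of_nonneg_right this (Real.exp_nonneg _)
  exact le_trans (h x hx) hFx

theorem gronwall_int (b : ℝ → ℝ) (hb : Integrable b) (hb0 : ∀ t, 0 ≤ b t)
    (f : ℝ → ℝ) (hf : ContinuousOn f (Icc 0 1)) (hf0 : ∀ t ∈ Icc (0:ℝ) 1, 0 ≤ f t)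
    (a : ℝ)
    (h : ∀ x ∈ Icc (0:ℝ) 1, f x ≤ a + ∫ t in (0:ℝ)..x, b t * f t) :
    ∀ x ∈ Icc (0:ℝ) 1, f x ≤ a * Real.exp (∫ t, b t) := by
  intro x hx
  obtain ⟨M0, hM0⟩ := isCompact_Icc.exists_bound_of_continuousOn hf
  set M : ℝ := max M0 1 with hM
  have hM1 : (1:ℝ) ≤ M := le_max_right _ _
  have hMpos : (0:ℝ) < M := lt_of_lt_of_le one_pos hM1
  have hfM : ∀ t ∈ Icc (0:ℝ) 1, f t ≤ M := fun t ht =>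
    le_trans (le_trans (le_abs_self _) (hM0 t ht)) (le_max_left _ _)
  set B : ℝ := ∫ t, b t with hB
  have key : ∀ ε : ℝ, 0 < ε → f x ≤ (a + M * ε) * Real.exp (B + ε) := by
    intro ε hε
    obtain ⟨g, -, hg_close, hg_cont, hg_int⟩ :=
      hb.exists_hasCompactSupport_integral_sub_le hε
    set c : ℝ → ℝ := fun t => max (g t) 0 with hc
    have hc_cont : Continuous c := hg_cont.max continuous_const
    have hc0 : ∀ t, 0 ≤ c t := fun t => le_max_right _ _
    have hbc : ∀ t, |b t - c t| ≤ ‖b t - g t‖ := by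
      intro t
      rcases le_or_gt 0 (g t) with h1 | h1
      · simp [hc, max_eq_left h1, Real.norm_eq_abs]
      · rw [hc]
        simp only [max_eq_right h1.le, Real.norm_eq_abs, sub_zero]
        rw [_root_.abs_of_nonneg (hb0 t)]
        calc b t ≤ b t - g t := by linarith
          _ ≤ |b t - g t| := le_abs_self _
    have hbgInt : Integrable (fun t => ‖b t - g t‖) := (hb.sub hg_int).norm
    have hbg_nonneg : 0 ≤ᵐ[volume] fun t => ‖b t - g t‖ :=
      Eventually.of_forall fun t => norm_nonneg _
    -- interval integrability facts on [0,y] for y ∈ Icc 0 1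
    have hsub : ∀ y ∈ Icc (0:ℝ) 1, uIcc (0:ℝ) y ⊆ Icc 0 1 := by
      intro y hy
      rw [uIcc_of_le hy.1]
      exact Icc_subset_Icc le_rfl hy.2
    have hbfInt : ∀ y ∈ Icc (0:ℝ) 1, IntervalIntegrable (fun t => b t * f t) volume 0 y :=
      fun y hy => (hb.intervalIntegrable).mul_continuousOn (hf.mono (hsub y hy))
    have hcfInt : ∀ y ∈ Icc (0:ℝ) 1, IntervalIntegrable (fun t => c t * f t) volume 0 y :=
      fun y hy => (hc_cont.continuousOn.mul (hf.mono (hsub y hy))).intervalIntegrable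
    have hbgMInt : ∀ y : ℝ, IntervalIntegrable (fun t => ‖b t - g t‖ * M) volume 0 y :=
      fun y => (hbgInt.intervalIntegrable).mul_const M
    have hbg_small : ∀ y ∈ Icc (0:ℝ) 1, (∫ t in (0:ℝ)..y, ‖b t - g t‖) ≤ ε := by
      intro y hy
      rw [intervalIntegral.integral_of_le hy.1]
      calc (∫ t in Ioc (0:ℝ) y, ‖b t - g t‖) ≤ ∫ t, ‖b t - g t‖ :=
            setIntegral_le_integral hbgInt hbg_nonneg
        _ ≤ ε := hg_close
    -- step: new integral inequality with kernel c
    have h' : ∀ y ∈ Icc (0:ℝ) 1, f y ≤ (a + M * ε) + ∫ t in (0:ℝ)..y, c t * f t := by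
      intro y hy
      have hdiff : (∫ t in (0:ℝ)..y, b t * f t) - (∫ t in (0:ℝ)..y, c t * f t)
          ≤ M * ε := by
        rw [← intervalIntegral.integral_sub (hbfInt y hy) (hcfInt y hy)]
        have hmono : (∫ t in (0:ℝ)..y, (b t * f t - c t * f t))
            ≤ ∫ t in (0:ℝ)..y, ‖b t - g t‖ * M := by
          apply intervalIntegral.integral_mono_on hy.1
            ((hbfInt y hy).sub (hcfInt y hy)) (hbgMInt y)
          intro t ht
          have ht' : t ∈ Icc (0:ℝ) 1 := ⟨ht.1, le_trans ht.2 hy.2⟩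
          have h1 : b t * f t - c t * f t = (b t - c t) * f t := by ring
          rw [h1]
          calc (b t - c t) * f t ≤ |b t - c t| * f t :=
                mul_le_mul_of_nonneg_right (le_abs_self _) (hf0 t ht')
            _ ≤ ‖b t - g t‖ * M :=
                mul_le_mul (hbc t) (hfM t ht') (hf0 t ht') (norm_nonneg _)
        calc (∫ t in (0:ℝ)..y, (b t * f t - c t * f t))
            ≤ ∫ t in (0:ℝ)..y, ‖b t - g t‖ * M := hmono
          _ = (∫ t in (0:ℝ)..y, ‖b t - g t‖) * M := by
              rw [← intervalIntegral.integral_mul_const]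
          _ ≤ ε * M := mul_le_mul_of_nonneg_right (hbg_small y hy) hMpos.le
          _ = M * ε := mul_comm _ _
      have := h y hy
      linarith
    have hgron := gronwall_cont c hc_cont hc0 f hf (a + M * ε) h' x hx
    have hCB : (∫ t in (0:ℝ)..x, c t) ≤ B + ε := by
      have h1 : (∫ t in (0:ℝ)..x, c t) - (∫ t in (0:ℝ)..x, b t) ≤ ε := by
        rw [← intervalIntegral.integral_sub (hc_cont.intervalIntegrable 0 x)
          (hb.intervalIntegrable)]
        calc (∫ t in (0:ℝ)..x, (c t - b t)) ≤ ∫ t in (0:ℝ)..x, ‖b t - g t‖ := by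
              apply intervalIntegral.integral_mono_on hx.1
                ((hc_cont.intervalIntegrable 0 x).sub (hb.intervalIntegrable))
                (hbgInt.intervalIntegrable)
              intro t _
              calc c t - b t ≤ |b t - c t| := by
                    rw [abs_sub_comm]; exact le_abs_self _
                _ ≤ ‖b t - g t‖ := hbc t
          _ ≤ ε := hbg_small x hx
      have h2 : (∫ t in (0:ℝ)..x, b t) ≤ B := by
        rw [intervalIntegral.integral_of_le hx.1]
        exact setIntegral_le_integral hb (Eventually.of_forall hb0)
      linarith
    calc f x ≤ (a + M * ε) * Real.exp (∫ t in (0:ℝ)..x, c t) := hgron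
      _ ≤ (a + M * ε) * Real.exp (B + ε) := by
          apply mul_le_mul_of_nonneg_left (Real.exp_le_exp.2 hCB)
          have := hf0 x hx
          nlinarith [h' x hx, hgron, Real.exp_pos (∫ t in (0:ℝ)..x, c t)]
  -- pass to the limit ε → 0⁺
  have hlim : Tendsto (fun ε : ℝ => (a + M * ε) * Real.exp (B + ε)) (nhdsWithin 0 (Ioi 0))
      (nhds (a * Real.exp B)) := by
    have hcont : Continuous (fun ε : ℝ => (a + M * ε) * Real.exp (B + ε)) := by
      continuity
    have := hcont.tendsto 0
    simp only [mul_zero, add_zero] at this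
    exact this.mono_left nhdsWithin_le_nhds
  exact ge_of_tendsto hlim (eventually_nhdsWithin_of_forall fun ε hε => key ε hε)

set_option maxHeartbeats 1000000 in
/-- Estimate for the solution of the Volterra integral equation
satisfied by the fundamental solution `S(λ,·)` (with `u(0) = 0`, `u'(0) = 1`). -/
theorem stmt_8 (q : ℝ → ℝ) (hq : IntegrableOn q (Set.Icc 0 1))
    (Q : ℝ) (hQ : Q = ∫ t in (0:ℝ)..1, |q t|)
    (ρ : ℂ) (hρ : ρ ≠ 0) (τ : ℝ) (hτ : τ = |ρ.im|)
    (u : ℝ → ℂ) (hu : ContinuousOn u (Set.Icc 0 1))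
    (heq : ∀ x ∈ Set.Icc (0:ℝ) 1,
      u x = Complex.sin (ρ * x) / ρ +
        ∫ t in (0:ℝ)..x, (Complex.sin (ρ * ((x:ℂ) - (t:ℂ))) / ρ) * (q t : ℂ) * u t) :
    ∀ x ∈ Set.Icc (0:ℝ) 1,
      ‖u x - Complex.sin (ρ * x) / ρ‖ ≤
        (Q / ‖ρ‖ ^ 2) * Real.exp (τ * x + Q / ‖ρ‖) := by
  have hr : 0 < ‖ρ‖ := norm_pos_iff.mpr hρ
  set r : ℝ := ‖ρ‖ with hrdef
  -- sin bounds
  have hsin : ∀ y : ℝ, 0 ≤ y → ‖Complex.sin (ρ * y)‖ ≤ Real.exp (τ * y) := by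
    intro y hy
    refine (abs_sin_le' _).trans ?_
    rw [Real.exp_le_exp]
    have him : (ρ * (y:ℂ)).im = ρ.im * y := by simp [Complex.mul_im]
    rw [him, hτ, abs_mul, _root_.abs_of_nonneg hy]
  -- |q| facts
  have habs_q : IntegrableOn (fun t => |q t|) (Set.Icc 0 1) := hq.abs
  have hQ0 : 0 ≤ Q := by
    rw [hQ]
    exact intervalIntegral.integral_nonneg zero_le_one (fun t _ => abs_nonneg _)
  have hsubI : ∀ x ∈ Set.Icc (0:ℝ) 1, Set.uIcc (0:ℝ) x ⊆ Set.Icc 0 1 := by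
    intro x hx
    rw [Set.uIcc_of_le hx.1]
    exact Set.Icc_subset_Icc le_rfl hx.2
  have hqII : ∀ x ∈ Set.Icc (0:ℝ) 1, IntervalIntegrable (fun t => |q t|) volume 0 x :=
    fun x hx => (habs_q.mono_set (hsubI x hx)).intervalIntegrable
  have hqmul : ∀ x ∈ Set.Icc (0:ℝ) 1, ∀ φ : ℝ → ℝ, ContinuousOn φ (Set.Icc 0 1) →
      IntervalIntegrable (fun t => |q t| * φ t) volume 0 x := by
    intro x hx φ hφ
    exact (hqII x hx).mul_continuousOn (hφ.mono (hsubI x hx))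
  have hQx : ∀ x ∈ Set.Icc (0:ℝ) 1, (∫ t in (0:ℝ)..x, |q t|) ≤ Q := by
    intro x hx
    have i1 : IntervalIntegrable (fun t => |q t|) volume 0 x := hqII x hx
    have i2 : IntervalIntegrable (fun t => |q t|) volume x 1 := by
      refine (habs_q.mono_set ?_).intervalIntegrable
      rw [Set.uIcc_of_le hx.2]
      exact Set.Icc_subset_Icc hx.1 le_rfl
    have hadd := intervalIntegral.integral_add_adjacent_intervals i1 i2
    have hnn : 0 ≤ ∫ t in x..(1:ℝ), |q t| :=
      intervalIntegral.integral_nonneg hx.2 (fun t _ => abs_nonneg _)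
    rw [hQ, ← hadd]
    linarith
  -- key integral inequality (*)
  have hstar : ∀ x ∈ Set.Icc (0:ℝ) 1,
      ‖u x - Complex.sin (ρ * x) / ρ‖ ≤
        ∫ t in (0:ℝ)..x, |q t| * (Real.exp (τ * (x - t)) / r * ‖u t‖) := by
    intro x hx
    have hW : u x - Complex.sin (ρ * x) / ρ =
        ∫ t in (0:ℝ)..x, (Complex.sin (ρ * ((x:ℂ) - (t:ℂ))) / ρ) * (q t : ℂ) * u t := by
      rw [heq x hx]; ring
    rw [hW]
    have h1 : ‖∫ t in (0:ℝ)..x,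
        (Complex.sin (ρ * ((x:ℂ) - (t:ℂ))) / ρ) * (q t : ℂ) * u t‖ ≤
        ∫ t in (0:ℝ)..x, ‖(Complex.sin (ρ * ((x:ℂ) - (t:ℂ))) / ρ) * (q t : ℂ) * u t‖ := by
      simpa using
        intervalIntegral.norm_integral_le_integral_norm (μ := volume)
          (f := fun t : ℝ => (Complex.sin (ρ * ((x:ℂ) - (t:ℂ))) / ρ) * (q t : ℂ) * u t) hx.1
    refine h1.trans ?_
    -- integrability of the norm integrand
    have hψ : ContinuousOn (fun t : ℝ => (Complex.sin (ρ * ((x:ℂ) - (t:ℂ))) / ρ) * u t)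
        (Set.Icc 0 1) := by
      apply ContinuousOn.mul ?_ hu
      apply Continuous.continuousOn
      exact (Complex.continuous_sin.comp
        (continuous_const.mul (continuous_const.sub Complex.continuous_ofReal))).div_const ρ
    have hWint : IntervalIntegrable
        (fun t => (Complex.sin (ρ * ((x:ℂ) - (t:ℂ))) / ρ) * (q t : ℂ) * u t) volume 0 x := by
      have hqc : IntegrableOn (fun t => (q t : ℂ)) (Set.uIcc 0 x) :=
        (hq.mono_set (hsubI x hx)).ofReal
      have hqci : IntervalIntegrable (fun t => (q t : ℂ)) volume 0 x := hqc.intervalIntegrable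
      have hψ2 : ContinuousOn (fun t : ℝ => (Complex.sin (ρ * ((x:ℂ) - (t:ℂ))) / ρ) * u t)
          (Set.uIcc 0 x) := hψ.mono (hsubI x hx)
      have h2 : IntervalIntegrable
          (fun t => (q t : ℂ) * ((Complex.sin (ρ * ((x:ℂ) - (t:ℂ))) / ρ) * u t)) volume 0 x :=
        hqci.mul_continuousOn hψ2
      have h3 : (fun t : ℝ => (Complex.sin (ρ * ((x:ℂ) - (t:ℂ))) / ρ) * (q t : ℂ) * u t)
          = fun t : ℝ => (q t : ℂ) * ((Complex.sin (ρ * ((x:ℂ) - (t:ℂ))) / ρ) * u t) := by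
        funext t; ring
      rw [h3]; exact h2
    have hg2 : ContinuousOn (fun t : ℝ => Real.exp (τ * (x - t)) / r * ‖u t‖)
        (Set.Icc 0 1) := by
      apply ContinuousOn.mul ?_ (continuous_norm.comp_continuousOn hu)
      apply Continuous.continuousOn
      exact (Real.continuous_exp.comp (continuous_const.mul
        (continuous_const.sub continuous_id))).div_const r
    have hRint : IntervalIntegrable
        (fun t : ℝ => |q t| * (Real.exp (τ * (x - t)) / r * ‖u t‖)) volume 0 x :=
      hqmul x hx _ hg2
    refine intervalIntegral.integral_mono_on hx.1 hWint.norm hRint ?_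
    intro t ht
    have hxt : (0:ℝ) ≤ x - t := sub_nonneg.2 ht.2
    have hcast : (x:ℂ) - (t:ℂ) = ((x - t : ℝ) : ℂ) := by push_cast; ring
    have hs := hsin (x - t) hxt
    rw [hcast]
    simp only [norm_mul, norm_div, Complex.norm_real, Real.norm_eq_abs]
    calc ‖Complex.sin (ρ * ((x - t : ℝ):ℂ))‖ / r * |q t| * ‖u t‖
        ≤ Real.exp (τ * (x - t)) / r * |q t| * ‖u t‖ := by
          gcongr
      _ = |q t| * (Real.exp (τ * (x - t)) / r * ‖u t‖) := by ring
  -- Gronwall setup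
  set f : ℝ → ℝ := fun t => ‖u t‖ * Real.exp (-(τ * t)) with hfdef
  set b : ℝ → ℝ := (Set.Icc (0:ℝ) 1).indicator (fun t => |q t| / r) with hbdef
  have hbOn : IntegrableOn (fun t => |q t| / r) (Set.Icc 0 1) := habs_q.div_const r
  have hb : Integrable b := hbOn.integrable_indicator measurableSet_Icc
  have hb0 : ∀ t, 0 ≤ b t := fun t =>
    Set.indicator_nonneg (fun s _ => by positivity) t
  have hfcont : ContinuousOn f (Set.Icc 0 1) := by
    apply (continuous_norm.comp_continuousOn hu).mul
    exact (Real.continuous_exp.comp (continuous_const.mul continuous_id).neg).continuousOn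
  have hf0 : ∀ t ∈ Set.Icc (0:ℝ) 1, 0 ≤ f t :=
    fun t _ => mul_nonneg (norm_nonneg _) (Real.exp_nonneg _)
  have hexp1 : ∀ s : ℝ, Real.exp s * Real.exp (-s) = 1 := by
    intro s; rw [← Real.exp_add]; simp
  have hineq : ∀ x ∈ Set.Icc (0:ℝ) 1, f x ≤ 1 / r + ∫ t in (0:ℝ)..x, b t * f t := by
    intro x hx
    have h1 := hstar x hx
    have hsx : ‖Complex.sin (ρ * x) / ρ‖ ≤ Real.exp (τ * x) / r := by
      rw [norm_div]
      have := hsin x hx.1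
      gcongr
    have htri : ‖u x‖ ≤ Real.exp (τ * x) / r +
        ∫ t in (0:ℝ)..x, |q t| * (Real.exp (τ * (x - t)) / r * ‖u t‖) := by
      have : ‖u x‖ ≤ ‖Complex.sin (ρ * x) / ρ‖ +
          ‖u x - Complex.sin (ρ * x) / ρ‖ := by
        have := norm_add_le (Complex.sin (ρ * x) / ρ) (u x - Complex.sin (ρ * x) / ρ)
        simpa using this
      linarith
    have hIeq : Real.exp (-(τ * x)) *
        (∫ t in (0:ℝ)..x, |q t| * (Real.exp (τ * (x - t)) / r * ‖u t‖))
        = ∫ t in (0:ℝ)..x, b t * f t := by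
      rw [← intervalIntegral.integral_const_mul]
      apply intervalIntegral.integral_congr
      intro t ht
      have ht' : t ∈ Set.Icc (0:ℝ) 1 := hsubI x hx ht
      have hbt : b t = |q t| / r := Set.indicator_of_mem ht' _
      have he : Real.exp (-(τ * x)) * Real.exp (τ * (x - t)) = Real.exp (-(τ * t)) := by
        rw [← Real.exp_add]; ring_nf
      simp only [hfdef, hbt]
      calc Real.exp (-(τ * x)) * (|q t| * (Real.exp (τ * (x - t)) / r * ‖u t‖))
          = (Real.exp (-(τ * x)) * Real.exp (τ * (x - t))) * (|q t| / r * ‖u t‖) := by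
            ring
        _ = |q t| / r * (‖u t‖ * Real.exp (-(τ * t))) := by rw [he]; ring
    have h2 := mul_le_mul_of_nonneg_right htri (Real.exp_nonneg (-(τ * x)))
    have h4 : Real.exp (τ * x) / r * Real.exp (-(τ * x)) = 1 / r := by
      rw [div_mul_eq_mul_div, hexp1 (τ * x)]
    have h5 : (∫ t in (0:ℝ)..x, |q t| * (Real.exp (τ * (x - t)) / r * ‖u t‖))
        * Real.exp (-(τ * x)) = ∫ t in (0:ℝ)..x, b t * f t := by
      rw [mul_comm]; exact hIeq
    have h3 : (Real.exp (τ * x) / r +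
        (∫ t in (0:ℝ)..x, |q t| * (Real.exp (τ * (x - t)) / r * ‖u t‖)))
          * Real.exp (-(τ * x))
        = 1 / r + ∫ t in (0:ℝ)..x, b t * f t := by
      rw [add_mul, h4, h5]
    exact le_trans h2 (le_of_eq h3)
  -- apply Gronwall
  have hgron := gronwall_int b hb hb0 f hfcont hf0 (1 / r) hineq
  have hBeq : (∫ t, b t) = Q / r := by
    rw [hbdef, MeasureTheory.integral_indicator measurableSet_Icc,
      MeasureTheory.integral_div]
    congr 1
    rw [hQ, intervalIntegral.integral_of_le zero_le_one,
      ← MeasureTheory.integral_Icc_eq_integral_Ioc]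
  have hub : ∀ t ∈ Set.Icc (0:ℝ) 1, ‖u t‖ ≤
      Real.exp (τ * t) / r * Real.exp (Q / r) := by
    intro t ht
    have h1 := hgron t ht
    rw [hBeq] at h1
    have h2 := mul_le_mul_of_nonneg_right h1 (Real.exp_nonneg (τ * t))
    have h3 : ‖u t‖ * Real.exp (-(τ * t)) * Real.exp (τ * t)
        = ‖u t‖ := by
      rw [mul_assoc, mul_comm (Real.exp (-(τ * t))), hexp1 (τ * t), mul_one]
    calc ‖u t‖ = f t * Real.exp (τ * t) := h3.symm
      _ ≤ 1 / r * Real.exp (Q / r) * Real.exp (τ * t) := h2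
      _ = Real.exp (τ * t) / r * Real.exp (Q / r) := by ring
  -- final estimate
  intro x hx
  refine (hstar x hx).trans ?_
  have hφ2 : ContinuousOn (fun t : ℝ => Real.exp (τ * (x - t)) / r *
      (Real.exp (τ * t) / r * Real.exp (Q / r))) (Set.Icc 0 1) := by
    apply ContinuousOn.mul
    · exact ((Real.continuous_exp.comp (continuous_const.mul
        (continuous_const.sub continuous_id))).div_const r).continuousOn
    · exact (((Real.continuous_exp.comp (continuous_const.mul continuous_id)).div_const r).mul
        continuous_const).continuousOn
  have hint2 : IntervalIntegrable (fun t : ℝ => |q t| * (Real.exp (τ * (x - t)) / r *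
      (Real.exp (τ * t) / r * Real.exp (Q / r)))) volume 0 x := hqmul x hx _ hφ2
  have hg2 : ContinuousOn (fun t : ℝ => Real.exp (τ * (x - t)) / r * ‖u t‖)
      (Set.Icc 0 1) := by
    apply ContinuousOn.mul ?_ (continuous_norm.comp_continuousOn hu)
    exact ((Real.continuous_exp.comp (continuous_const.mul
      (continuous_const.sub continuous_id))).div_const r).continuousOn
  have hRint : IntervalIntegrable
      (fun t : ℝ => |q t| * (Real.exp (τ * (x - t)) / r * ‖u t‖)) volume 0 x :=
    hqmul x hx _ hg2
  have step1 : (∫ t in (0:ℝ)..x, |q t| * (Real.exp (τ * (x - t)) / r * ‖u t‖))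
      ≤ ∫ t in (0:ℝ)..x, |q t| * (Real.exp (τ * (x - t)) / r *
        (Real.exp (τ * t) / r * Real.exp (Q / r))) := by
    apply intervalIntegral.integral_mono_on hx.1 hRint hint2
    intro t ht
    have ht' : t ∈ Set.Icc (0:ℝ) 1 := ⟨ht.1, le_trans ht.2 hx.2⟩
    apply mul_le_mul_of_nonneg_left ?_ (abs_nonneg _)
    exact mul_le_mul_of_nonneg_left (hub t ht')
      (div_nonneg (Real.exp_nonneg _) hr.le)
  have step2 : (∫ t in (0:ℝ)..x, |q t| * (Real.exp (τ * (x - t)) / r *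
      (Real.exp (τ * t) / r * Real.exp (Q / r))))
      = Real.exp (τ * x + Q / r) / r ^ 2 * ∫ t in (0:ℝ)..x, |q t| := by
    rw [← intervalIntegral.integral_const_mul]
    apply intervalIntegral.integral_congr
    intro t _
    have he : Real.exp (τ * (x - t)) * Real.exp (τ * t) = Real.exp (τ * x) := by
      rw [← Real.exp_add]; ring_nf
    have he2 : Real.exp (τ * x) * Real.exp (Q / r) = Real.exp (τ * x + Q / r) := by
      rw [← Real.exp_add]
    simp only
    calc |q t| * (Real.exp (τ * (x - t)) / r * (Real.exp (τ * t) / r * Real.exp (Q / r)))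
        = (Real.exp (τ * (x - t)) * Real.exp (τ * t)) * Real.exp (Q / r) / r ^ 2 * |q t| := by
          ring
      _ = Real.exp (τ * x + Q / r) / r ^ 2 * |q t| := by rw [he, he2]
  calc (∫ t in (0:ℝ)..x, |q t| * (Real.exp (τ * (x - t)) / r * ‖u t‖))
      ≤ ∫ t in (0:ℝ)..x, |q t| * (Real.exp (τ * (x - t)) / r *
        (Real.exp (τ * t) / r * Real.exp (Q / r))) := step1
    _ = Real.exp (τ * x + Q / r) / r ^ 2 * ∫ t in (0:ℝ)..x, |q t| := step2
    _ ≤ Real.exp (τ * x + Q / r) / r ^ 2 * Q :=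
        mul_le_mul_of_nonneg_left (hQx x hx)
          (div_nonneg (Real.exp_nonneg _) (sq_nonneg r))
    _ = Q / r ^ 2 * Real.exp (τ * x + Q / r) := by ring
end

section
/- Let z ∈ ℂ with z ≠ 0, sin z ≠ 0 and cos z ≠ 0, set m(z) = (z·sin z)/(4·cos z) − (3·z·cos z)/(4·sin z), and let A₀(z) be the 4×4 complex matrix with rows ((sin z)/z, 0, 0, −1), (0, (sin z)/z, 0, −1), (0, 0, (sin z)/z, −1) and (cos z, cos z, cos z, −m(z)). Then A₀(z) is invertible if and only if cos z ≠ 1/4 and cos z ≠ −1/4. -/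
open Complex Matrix

/-- Invertibility of the coefficient matrix `A₀(z)`. -/
theorem stmt_9 (z : ℂ) (hz : z ≠ 0) (hs : Complex.sin z ≠ 0)
    (hc : Complex.cos z ≠ 0) (m : ℂ)
    (hm : m = z * Complex.sin z / (4 * Complex.cos z)
            - 3 * z * Complex.cos z / (4 * Complex.sin z)) :
    IsUnit
      (!![Complex.sin z / z, 0, 0, -1;
          0, Complex.sin z / z, 0, -1;
          0, 0, Complex.sin z / z, -1;
          Complex.cos z, Complex.cos z, Complex.cos z, -m] :
        Matrix (Fin 4) (Fin 4) ℂ) ↔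
      (Complex.cos z ≠ 1 / 4 ∧ Complex.cos z ≠ -(1 / 4)) := by
  rw [Matrix.isUnit_iff_isUnit_det, isUnit_iff_ne_zero]
  have hdet :
      (!![Complex.sin z / z, 0, 0, -1;
          0, Complex.sin z / z, 0, -1;
          0, 0, Complex.sin z / z, -1;
          Complex.cos z, Complex.cos z, Complex.cos z, -m] :
        Matrix (Fin 4) (Fin 4) ℂ).det
      = Complex.sin z ^ 2 * ((4 * Complex.cos z - 1) * (4 * Complex.cos z + 1))
          / (4 * z ^ 2 * Complex.cos z) := by
    subst hm
    rw [eq_div_iff (by exact mul_ne_zero (mul_ne_zero (by norm_num) (pow_ne_zero 2 hz)) hc)]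
    simp [Matrix.det_succ_row_zero, Fin.sum_univ_succ, Fin.castSucc, Fin.castAdd, Fin.castLE, Matrix.cons_val_succ, Fin.succAbove]
    ring_nf
    field_simp
    linear_combination (-1 : ℂ) * (Complex.sin_sq_add_cos_sq z)
  rw [hdet]
  constructor
  · intro h
    constructor
    · intro hc1
      apply h
      rw [hc1]
      norm_num
    · intro hc1
      apply h
      rw [hc1]
      norm_num
  · rintro ⟨h1, h2⟩
    have e1 : 4 * Complex.cos z - 1 ≠ 0 := by
      intro h; apply h1; linear_combination h / 4
    have e2 : 4 * Complex.cos z + 1 ≠ 0 := by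
      intro h; apply h2; linear_combination h / 4
    apply div_ne_zero
    · exact mul_ne_zero (pow_ne_zero 2 hs) (mul_ne_zero e1 e2)
    · exact mul_ne_zero (mul_ne_zero (by norm_num) (pow_ne_zero 2 hz)) hc
end
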